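/- Let r ≥ 2, s ≥ 0, t ≥ 0 be integers with s + t ≥ 1. Let G be any simple graph with r vertices and let C(G) be the cone over G, obtained by adding a new vertex adjacent to all vertices of G. Then λ_min(S(C(G)(s,t))) ≤ λ_min(S(K_{1,r}(s,t))). -/

import Mathlib

open Matrix

/-- A Seidel matrix: symmetric, zero diagonal, off-diagonal entries `±1`. -/
def IsSeidel {n : ℕ} (S : Matrix (Fin n) (Fin n) ℝ) : Prop :=
  S.IsSymm ∧ (∀ i, S i i = 0) ∧ ∀ i j, i ≠ j → S i j = 1 ∨ S i j = -1

/-- Smallest eigenvalue of a real symmetric matrix (junk value `0` if not Hermitian). -/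
noncomputable def minEig {m : Type*} [Fintype m] [DecidableEq m] (A : Matrix m m ℝ) : ℝ := by
  classical
  exact if hA : A.IsHermitian then ⨅ i, hA.eigenvalues i else 0

/-- Largest eigenvalue of a real symmetric matrix (junk value `0` if not Hermitian). -/
noncomputable def maxEig {m : Type*} [Fintype m] [DecidableEq m] (A : Matrix m m ℝ) : ℝ := by
  classical
  exact if hA : A.IsHermitian then ⨆ i, hA.eigenvalues i else 0

/-- The Seidel matrix of a simple graph `G`, i.e. `J - I - 2A(G)`:
zero diagonal, `-1` on adjacent pairs, `1` on distinct non-adjacent pairs. -/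
noncomputable def seidelOf {V : Type*} [Fintype V] (G : SimpleGraph V) : Matrix V V ℝ := by
  classical
  exact Matrix.of fun i j => if i = j then 0 else if G.Adj i j then -1 else 1

/-- Smallest eigenvalue of the Seidel matrix of a finite graph. -/
noncomputable def minSeidelEig {V : Type*} [Finite V] (G : SimpleGraph V) : ℝ := by
  classical
  letI := Fintype.ofFinite V
  exact minEig (seidelOf G)

/-- Spectral radius (largest adjacency eigenvalue) of a finite graph. -/
noncomputable def specRad {V : Type*} [Finite V] (G : SimpleGraph V) : ℝ := by
  classical
  letI := Fintype.ofFinite V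
  exact maxEig (G.adjMatrix ℝ)

/-- Switching equivalence: `T = D S D` for some diagonal `±1` matrix `D`. -/
def SwEquiv {n : ℕ} (S T : Matrix (Fin n) (Fin n) ℝ) : Prop :=
  ∃ ε : Fin n → ℝ, (∀ i, ε i = 1 ∨ ε i = -1) ∧
    T = Matrix.diagonal ε * S * Matrix.diagonal ε

/-- The switching graph of a Seidel matrix `S`: the graph on `2n` vertices whose Seidel
matrix is the block matrix `((S, I - S), (I - S, S))`, adjacency given by entries `-1`. -/
def switchGraph {n : ℕ} (S : Matrix (Fin n) (Fin n) ℝ) : SimpleGraph (Fin n ⊕ Fin n) :=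
  SimpleGraph.fromRel fun x y => Matrix.fromBlocks S (1 - S) (1 - S) S x y = -1

/-- Independence number of a graph. -/
noncomputable def indepNum {V : Type*} (G : SimpleGraph V) : ℕ := Gᶜ.cliqueNum

/-- The graph consisting of `t` disjoint copies of `K₂`. -/
def nK2 (t : ℕ) : SimpleGraph (Fin t × Fin 2) :=
  SimpleGraph.fromRel fun p q => p.1 = q.1

/-- The cone over a graph `G`: a new vertex joined to every vertex of `G`. -/
def coneG {V : Type*} (G : SimpleGraph V) : SimpleGraph (Unit ⊕ V) :=
  SimpleGraph.fromRel fun x y =>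
    (∃ v, x = Sum.inl () ∧ y = Sum.inr v) ∨
    (∃ u v, G.Adj u v ∧ x = Sum.inr u ∧ y = Sum.inr v)


section AuxEig

variable {n : Type*} [Fintype n] [DecidableEq n]

private lemma minEig_le_eig {A : Matrix n n ℝ} (hA : A.IsHermitian) (i : n) :
    minEig A ≤ hA.eigenvalues i := by
  rw [minEig, dif_pos hA]
  exact ciInf_le (Set.Finite.bddBelow (Set.finite_range _)) i

private lemma star_trans (U : Matrix n n ℝ) : (star U)ᵀ = U := by
  ext i j; simp [conjTranspose_apply]

private lemma quadform_expand (A : Matrix n n ℝ) (hA : A.IsHermitian) (x : n → ℝ) :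
    x ⬝ᵥ A *ᵥ x
      = ∑ i, hA.eigenvalues i * ((star (hA.eigenvectorUnitary : Matrix n n ℝ) *ᵥ x) i)^2 := by
  set U := (hA.eigenvectorUnitary : Matrix n n ℝ)
  set y := star U *ᵥ x with hy
  have hsp := hA.spectral_theorem
  calc x ⬝ᵥ A *ᵥ x
      = x ⬝ᵥ (U * (diagonal (RCLike.ofReal ∘ hA.eigenvalues) * star U)) *ᵥ x := by
        conv_lhs => rw [hsp]
        rw [Unitary.conjStarAlgAut_apply, Matrix.mul_assoc]
    _ = y ⬝ᵥ (diagonal (RCLike.ofReal ∘ hA.eigenvalues)) *ᵥ y := by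
        rw [← mulVec_mulVec, dotProduct_mulVec x U, ← mulVec_mulVec]
        congr 1
        rw [hy, ← vecMul_transpose, star_trans]
    _ = ∑ i, hA.eigenvalues i * (y i)^2 := by
        simp [dotProduct, mulVec_diagonal]
        refine Finset.sum_congr rfl fun i _ => ?_
        ring

private lemma dot_expand (A : Matrix n n ℝ) (hA : A.IsHermitian) (x : n → ℝ) :
    x ⬝ᵥ x = ∑ i, ((star (hA.eigenvectorUnitary : Matrix n n ℝ) *ᵥ x) i)^2 := by
  set U := (hA.eigenvectorUnitary : Matrix n n ℝ)
  have h1 : U * star U = 1 := (Matrix.mem_unitaryGroup_iff).mp (hA.eigenvectorUnitary).2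
  have : ∑ i, ((star U *ᵥ x) i)^2 = (star U *ᵥ x) ⬝ᵥ (star U *ᵥ x) := by
    simp [dotProduct, pow_two]
  rw [this, dotProduct_mulVec, vecMul_mulVec]
  have h2 : (star U)ᵀ * star U = 1 := by rw [star_trans]; exact h1
  rw [h2, vecMul_one]

private lemma rayleigh_lower (A : Matrix n n ℝ) (hA : A.IsHermitian) (x : n → ℝ) :
    minEig A * (x ⬝ᵥ x) ≤ x ⬝ᵥ A *ᵥ x := by
  rw [quadform_expand A hA x, dot_expand A hA x, Finset.mul_sum]
  exact Finset.sum_le_sum fun i _ =>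
    mul_le_mul_of_nonneg_right (minEig_le_eig hA i) (sq_nonneg _)

private lemma le_minEig [Nonempty n] (A : Matrix n n ℝ) (hA : A.IsHermitian) {c : ℝ}
    (h : ∀ x : n → ℝ, c * (x ⬝ᵥ x) ≤ x ⬝ᵥ A *ᵥ x) : c ≤ minEig A := by
  rw [minEig, dif_pos hA]
  refine le_ciInf fun i => ?_
  set v : n → ℝ := ⇑(hA.eigenvectorBasis i) with hv
  have hev : hA.eigenvalues i = v ⬝ᵥ A *ᵥ v := by
    have := hA.eigenvalues_eq i
    simpa [hv] using this
  have hnorm : v ⬝ᵥ v = 1 := by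
    have h0 := hA.eigenvectorBasis.orthonormal.1 i
    rw [EuclideanSpace.norm_eq] at h0
    have h3 : ∑ j, (v j)^2 = 1 := by
      have := congrArg (· ^ 2) h0
      simpa [Real.sq_sqrt
        (Finset.sum_nonneg fun j _ => sq_nonneg (hA.eigenvectorBasis i j))] using this
    simpa [dotProduct, pow_two] using h3
  have h1 := h v
  rw [hnorm, mul_one] at h1
  rw [hev]; exact h1

end AuxEig

private lemma minSeidelEig_eq' {V : Type*} [Fintype V] [DecidableEq V] (G : SimpleGraph V) :
    minSeidelEig G = minEig (seidelOf G) := by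
  unfold minSeidelEig
  congr!

private lemma seidel_herm' {V : Type*} [Fintype V] (G : SimpleGraph V) :
    (seidelOf G).IsHermitian := by
  rw [Matrix.IsHermitian]
  ext i j
  by_cases h : i = j
  · subst h; simp [seidelOf, conjTranspose_apply]
  · rw [conjTranspose_apply]
    simp only [seidelOf, Matrix.of_apply, h, Ne.symm h, if_false, star_trivial]
    rw [SimpleGraph.adj_comm]

private lemma sum_V {r s t : ℕ} (f : ((Unit ⊕ Fin r) ⊕ (Fin s ⊕ Fin t × Fin 2)) → ℝ) :
    ∑ v, f v = f (.inl (.inl ())) + (∑ i : Fin r, f (.inl (.inr i)))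
      + ∑ z : Fin s ⊕ Fin t × Fin 2, f (.inr z) := by
  rw [Fintype.sum_sum_type, Fintype.sum_sum_type]
  simp

set_option maxHeartbeats 2000000 in
/-- For integers `r ≥ 2`, `s, t ≥ 0` with `s + t ≥ 1` and any graph `G` on `r`
vertices, `λ_min(S(C(G)(s,t))) ≤ λ_min(S(K_{1,r}(s,t)))`, where `K_{1,r}` is the cone over
the empty graph on `r` vertices. -/
theorem stmt_13 (r s t : ℕ) (hr : 2 ≤ r) (hst : 1 ≤ s + t) (G : SimpleGraph (Fin r)) :
    minSeidelEig (coneG G ⊕g ((⊥ : SimpleGraph (Fin s)) ⊕g nK2 t)) ≤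
      minSeidelEig (coneG (⊥ : SimpleGraph (Fin r)) ⊕g ((⊥ : SimpleGraph (Fin s)) ⊕g nK2 t)) := by
  classical
  rw [minSeidelEig_eq', minSeidelEig_eq']
  set A : Matrix ((Unit ⊕ Fin r) ⊕ (Fin s ⊕ Fin t × Fin 2)) _ ℝ :=
    seidelOf (coneG G ⊕g ((⊥ : SimpleGraph (Fin s)) ⊕g nK2 t)) with hAdef
  set B : Matrix ((Unit ⊕ Fin r) ⊕ (Fin s ⊕ Fin t × Fin 2)) _ ℝ :=
    seidelOf (coneG (⊥ : SimpleGraph (Fin r)) ⊕g ((⊥ : SimpleGraph (Fin s)) ⊕g nK2 t)) with hBdef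
  have hA : A.IsHermitian := seidel_herm' _
  have hB : B.IsHermitian := seidel_herm' _
  have hrne : (r : ℝ) ≠ 0 := Nat.cast_ne_zero.mpr (by omega)
  set n0 : Fin r := ⟨0, by omega⟩ with hn0
  -- Step 1 : minEig A ≤ -1
  have hAneg : minEig A ≤ -1 := by
    set x : (Unit ⊕ Fin r) ⊕ (Fin s ⊕ Fin t × Fin 2) → ℝ :=
      Pi.single (Sum.inl (Sum.inl ())) 1 + Pi.single (Sum.inl (Sum.inr n0)) 1 with hx
    have h1 := rayleigh_lower A hA x
    have e1 : A (Sum.inl (Sum.inl ())) (Sum.inl (Sum.inr n0)) = -1 := by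
      simp [hAdef, seidelOf, coneG]
    have e2 : A (Sum.inl (Sum.inr n0)) (Sum.inl (Sum.inl ())) = -1 := by
      simp [hAdef, seidelOf, coneG]
    have e3 : A (Sum.inl (Sum.inl ())) (Sum.inl (Sum.inl ())) = 0 := by
      simp [hAdef, seidelOf]
    have e4 : A (Sum.inl (Sum.inr n0)) (Sum.inl (Sum.inr n0)) = 0 := by
      simp [hAdef, seidelOf]
    have hxq : x ⬝ᵥ A *ᵥ x = -2 := by
      rw [hx]
      simp only [mulVec_add, dotProduct_add, add_dotProduct, Matrix.mulVec_single,
        single_dotProduct, mul_one, one_mul, Pi.smul_apply, MulOpposite.op_one, one_smul,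
        Matrix.col_apply]
      rw [e1, e2, e3, e4]
      norm_num
    have hxx : x ⬝ᵥ x = 2 := by
      rw [hx]
      simp only [dotProduct_add, add_dotProduct, single_dotProduct, one_mul,
        Pi.add_apply, Pi.single_apply]
      simp
      all_goals norm_num
    rw [hxq, hxx] at h1
    linarith
  -- Step 2 : main bound
  refine le_minEig B hB fun x => ?_
  set c : ℝ := (∑ i : Fin r, x (Sum.inl (Sum.inr i))) / r with hc
  set u : (Unit ⊕ Fin r) ⊕ (Fin s ⊕ Fin t × Fin 2) → ℝ :=
    Sum.elim (Sum.elim (fun _ => 0) (fun i => x (Sum.inl (Sum.inr i)) - c)) (fun _ => 0) with hu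
  set w : (Unit ⊕ Fin r) ⊕ (Fin s ⊕ Fin t × Fin 2) → ℝ := x - u with hw
  have huleaf : ∀ i : Fin r, u (Sum.inl (Sum.inr i)) = x (Sum.inl (Sum.inr i)) - c := by
    intro i; simp [hu]
  have huapex : u (Sum.inl (Sum.inl ())) = 0 := by simp [hu]
  have huinr : ∀ z : Fin s ⊕ Fin t × Fin 2, u (Sum.inr z) = 0 := by intro z; simp [hu]
  have hwleaf : ∀ i : Fin r, w (Sum.inl (Sum.inr i)) = c := by
    intro i; simp [hw, huleaf]
  have husum : ∑ i : Fin r, u (Sum.inl (Sum.inr i)) = 0 := by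
    simp only [huleaf]
    rw [Finset.sum_sub_distrib, Finset.sum_const, Finset.card_univ, Fintype.card_fin,
      nsmul_eq_mul, hc]
    field_simp
    ring
  have hwu : w ⬝ᵥ u = 0 := by
    rw [dotProduct, sum_V (fun v => w v * u v)]
    have hmid : ∑ i : Fin r, w (Sum.inl (Sum.inr i)) * u (Sum.inl (Sum.inr i)) = 0 := by
      rw [Finset.sum_congr rfl fun i _ => by rw [hwleaf i], ← Finset.mul_sum, husum, mul_zero]
    simp [huapex, huinr, hmid]
  have huw : u ⬝ᵥ w = 0 := by rw [dotProduct_comm]; exact hwu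
  have hBu : B *ᵥ u = -u := by
    funext v
    have hle : (B *ᵥ u) v
        = ∑ i : Fin r, B v (Sum.inl (Sum.inr i)) * u (Sum.inl (Sum.inr i)) := by
      rw [mulVec, dotProduct, sum_V (fun v' => B v v' * u v')]
      simp [huapex, huinr]
    rw [hle]
    rcases v with (⟨⟩|j)|z
    · have e : ∀ i : Fin r, B (Sum.inl (Sum.inl ())) (Sum.inl (Sum.inr i)) = -1 := by
        intro i; simp [hBdef, seidelOf, coneG]
      simp only [e, neg_one_mul, Pi.neg_apply]
      rw [Finset.sum_neg_distrib, husum]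
      simp [hu]
    · have e : ∀ i : Fin r, B (Sum.inl (Sum.inr j)) (Sum.inl (Sum.inr i))
          = if j = i then 0 else 1 := by
        intro i
        rcases eq_or_ne j i with h|h
        · simp [hBdef, seidelOf, h]
        · simp [hBdef, seidelOf, coneG, h, Fin.val_ne_of_ne h]
      simp only [e, Pi.neg_apply]
      have e2 : ∀ i : Fin r, (if j = i then (0:ℝ) else 1) * u (Sum.inl (Sum.inr i))
          = u (Sum.inl (Sum.inr i)) - (if i = j then u (Sum.inl (Sum.inr i)) else 0) := by
        intro i; rcases eq_or_ne i j with h|h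
        · subst h; simp
        · simp [h, Ne.symm h]
      rw [Finset.sum_congr rfl fun i _ => e2 i, Finset.sum_sub_distrib, husum,
        Finset.sum_ite_eq' Finset.univ j]
      simp
    · have e : ∀ i : Fin r, B (Sum.inr z) (Sum.inl (Sum.inr i)) = 1 := by
        intro i; simp [hBdef, seidelOf]
      simp only [e, one_mul, Pi.neg_apply]
      rw [husum, huinr]
      norm_num
  have huu : (0:ℝ) ≤ u ⬝ᵥ u := by
    rw [dotProduct]; exact Finset.sum_nonneg fun v _ => mul_self_nonneg _
  -- comparison of quadratic forms on w
  have hdiff : w ⬝ᵥ A *ᵥ w ≤ w ⬝ᵥ B *ᵥ w := by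
    have key : ∀ v v' : (Unit ⊕ Fin r) ⊕ (Fin s ⊕ Fin t × Fin 2),
        0 ≤ w v * ((B v v' - A v v') * w v') := by
      have heq : ∀ v v' : (Unit ⊕ Fin r) ⊕ (Fin s ⊕ Fin t × Fin 2),
          A v v' = B v v' → 0 ≤ w v * ((B v v' - A v v') * w v') := by
        intro v v' h; rw [h, sub_self, zero_mul, mul_zero]
      rintro ((⟨⟩|i)|z) ((⟨⟩|i')|z')
      · exact heq _ _ (by simp [hAdef, hBdef, seidelOf])
      · exact heq _ _ (by simp [hAdef, hBdef, seidelOf, coneG])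
      · exact heq _ _ (by simp [hAdef, hBdef, seidelOf])
      · exact heq _ _ (by simp [hAdef, hBdef, seidelOf, coneG])
      · -- leaf leaf : the interesting case
        rcases eq_or_ne i i' with h|h
        · subst h; exact heq _ _ (by simp [hAdef, hBdef, seidelOf])
        · have hBv : B (Sum.inl (Sum.inr i)) (Sum.inl (Sum.inr i')) = 1 := by
            simp [hBdef, seidelOf, coneG, h]
          have hAv : A (Sum.inl (Sum.inr i)) (Sum.inl (Sum.inr i')) = -1 ∨
              A (Sum.inl (Sum.inr i)) (Sum.inl (Sum.inr i')) = 1 := by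
            have hne : (Sum.inl (Sum.inr i) : (Unit ⊕ Fin r) ⊕ (Fin s ⊕ Fin t × Fin 2))
                ≠ Sum.inl (Sum.inr i') := by simp [h]
            rw [hAdef]
            simp only [seidelOf, Matrix.of_apply, if_neg hne]
            split_ifs <;> simp
          rw [hwleaf i, hwleaf i', hBv]
          rcases hAv with hAv|hAv <;> rw [hAv] <;> nlinarith [sq_nonneg c]
      · exact heq _ _ (by simp [hAdef, hBdef, seidelOf])
      · exact heq _ _ (by simp [hAdef, hBdef, seidelOf])
      · exact heq _ _ (by simp [hAdef, hBdef, seidelOf])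
      · exact heq _ _ (by simp [hAdef, hBdef, seidelOf])
    have expand : w ⬝ᵥ B *ᵥ w - w ⬝ᵥ A *ᵥ w
        = ∑ v, ∑ v', w v * ((B v v' - A v v') * w v') := by
      rw [dotProduct, dotProduct, ← Finset.sum_sub_distrib]
      refine Finset.sum_congr rfl fun v _ => ?_
      rw [mulVec, mulVec, dotProduct, dotProduct, Finset.mul_sum, Finset.mul_sum,
        ← Finset.sum_sub_distrib]
      refine Finset.sum_congr rfl fun v' _ => ?_
      ring
    have h0 : 0 ≤ w ⬝ᵥ B *ᵥ w - w ⬝ᵥ A *ᵥ w := by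
      rw [expand]
      exact Finset.sum_nonneg fun v _ => Finset.sum_nonneg fun v' _ => key v v'
    linarith
  -- assembly
  have hBt : Bᵀ = B := by
    ext i j
    have := congrFun (congrFun hB i) j
    simpa [conjTranspose_apply] using this
  have hsym : u ⬝ᵥ B *ᵥ w = 0 := by
    rw [dotProduct_mulVec]
    have hvm : u ᵥ* B = B *ᵥ u := by
      conv_lhs => rw [← hBt]
      rw [vecMul_transpose]
    rw [hvm, hBu]
    simpa using huw
  have hxwu : x = w + u := by funext v; simp [hw]
  have exB : x ⬝ᵥ B *ᵥ x = w ⬝ᵥ B *ᵥ w - u ⬝ᵥ u := by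
    calc x ⬝ᵥ B *ᵥ x = (w + u) ⬝ᵥ B *ᵥ (w + u) := by rw [← hxwu]
      _ = w ⬝ᵥ B *ᵥ w + u ⬝ᵥ B *ᵥ w + (w ⬝ᵥ B *ᵥ u + u ⬝ᵥ B *ᵥ u) := by
          rw [mulVec_add, dotProduct_add, add_dotProduct, add_dotProduct]
      _ = w ⬝ᵥ B *ᵥ w - u ⬝ᵥ u := by
          rw [hBu, hsym, dotProduct_neg, dotProduct_neg, hwu]
          ring
  have exX : x ⬝ᵥ x = w ⬝ᵥ w + u ⬝ᵥ u := by
    rw [hxwu, dotProduct_add, add_dotProduct, add_dotProduct, hwu, huw]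
    ring
  have r1 : minEig A * (w ⬝ᵥ w) ≤ w ⬝ᵥ A *ᵥ w := rayleigh_lower A hA w
  have r2 : minEig A * (u ⬝ᵥ u) ≤ -(u ⬝ᵥ u) := by nlinarith
  rw [exB, exX, mul_add]
  linarith
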